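/- Let $X$ be a Banach space, $p, q > 1$ with $1/p + 1/q = 1$, and $f : [a,b] \to X$ differentiable with $\|f'\| \in L^p[a,b]$. Then $\left\| \int_a^b f(t)\,dt - (b-a)\cdot\frac{f(a)+f(b)}{2} \right\| \le \frac{(b-a)^{1+1/q}}{2(q+1)^{1/q}} \left(\int_a^b \|f'(t)\|^p\,dt\right)^{1/p}$. -/

import Mathlib

open MeasureTheory intervalIntegral

theorem stmt11 {X : Type*} [NormedAddCommGroup X] [NormedSpace ℝ X] [CompleteSpace X]
    {a b : ℝ} (hab : a < b) {f f' : ℝ → X}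
    (hderiv : ∀ t ∈ Set.Icc a b, HasDerivAt f (f' t) t)
    (hint : IntervalIntegrable f' volume a b) {p q : ℝ} (hp : 1 < p) (hq : 1 < q) (hpq : 1 / p + 1 / q = 1)
    (hLp : IntervalIntegrable (fun t => ‖f' t‖ ^ p) volume a b) :
    ‖(∫ t in a..b, f t) - ((b - a) / 2) • (f a + f b)‖ ≤
      ((b - a) ^ (1 + 1 / q) / (2 * (q + 1) ^ (1 / q))) *
        (∫ t in a..b, ‖f' t‖ ^ p) ^ (1 / p) := by
  set c : ℝ := (a + b) / 2 with hc
  have hq0 : (0:ℝ) < q := lt_trans one_pos hq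
  have hq1 : (0:ℝ) < q + 1 := by linarith
  have hba : (0:ℝ) ≤ b - a := by linarith
  set μ := volume.restrict (Set.Ioc a b) with hμ
  haveI : IsFiniteMeasure μ := by
    constructor; rw [hμ, Measure.restrict_apply_univ]; exact measure_Ioc_lt_top
  -- integrability of the kernel smul f'
  have hf'Icc : IntegrableOn f' (Set.Icc a b) volume := by
    rw [← intervalIntegrable_iff_integrableOn_Icc_of_le hab.le]; exact hint
  have hker_cont : ContinuousOn (fun t : ℝ => t - c) (Set.Icc a b) :=
    (continuous_id.sub continuous_const).continuousOn
  have hksmul : IntervalIntegrable (fun t => (t - c) • f' t) volume a b := by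
    rw [intervalIntegrable_iff_integrableOn_Icc_of_le hab.le]
    exact hf'Icc.continuousOn_smul hker_cont isCompact_Icc
  have hf_int : IntervalIntegrable f volume a b := by
    apply ContinuousOn.intervalIntegrable
    rw [Set.uIcc_of_le hab.le]
    exact fun x hx => (hderiv x hx).continuousAt.continuousWithinAt
  -- key identity via FTC
  have key : (∫ t in a..b, f t) - ((b - a) / 2) • (f a + f b)
      = -(∫ t in a..b, (t - c) • f' t) := by
    have hg : ∀ x ∈ Set.uIcc a b, HasDerivAt (fun t => (t - c) • f t)
        (f x + (x - c) • f' x) x := by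
      intro x hx
      rw [Set.uIcc_of_le hab.le] at hx
      have h1 : HasDerivAt (fun t : ℝ => t - c) 1 x := (hasDerivAt_id x).sub_const c
      have := h1.smul (hderiv x hx); simp only [one_smul] at this
      exact (by rw [add_comm]; exact this)
    have hgint : IntervalIntegrable (fun x => f x + (x - c) • f' x) volume a b :=
      hf_int.add hksmul
    have hftc := intervalIntegral.integral_eq_sub_of_hasDerivAt hg hgint
    rw [intervalIntegral.integral_add hf_int hksmul] at hftc
    have hbc : (b - c) • f b - (a - c) • f a = ((b - a) / 2) • (f a + f b) := by
      have h1 : b - c = (b - a) / 2 := by rw [hc]; ring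
      have h2 : a - c = -((b - a) / 2) := by rw [hc]; ring
      rw [h1, h2, neg_smul, sub_neg_eq_add, smul_add, add_comm]
    rw [hbc] at hftc
    rw [← hftc]; abel
  rw [key, norm_neg]
  -- bound by integral of norms
  have hnorm : ‖∫ t in a..b, (t - c) • f' t‖ ≤ ∫ t in a..b, |t - c| * ‖f' t‖ := by
    have h := intervalIntegral.norm_integral_le_integral_norm
      (f := fun t => (t - c) • f' t) (μ := volume) (a := a) (b := b) hab.le
    simpa [norm_smul, Real.norm_eq_abs] using h
  -- Hölder
  have hpq' : Real.HolderConjugate q p := by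
    rw [Real.holderConjugate_iff]
    constructor
    · exact hq
    · rw [← one_div, ← one_div, add_comm]; exact hpq
  have hkm : MemLp (fun t : ℝ => |t - c|) (ENNReal.ofReal q) μ := by
    apply MemLp.of_bound ((continuous_abs.comp
      (continuous_id.sub continuous_const)).aestronglyMeasurable) (b - a)
    filter_upwards [ae_restrict_mem measurableSet_Ioc] with t ht
    simp only [Function.comp, Pi.sub_apply, id_eq, Real.norm_eq_abs, abs_abs]
    rw [abs_sub_le_iff]
    have h1 : a ≤ c := by rw [hc]; linarith
    have h2 : c ≤ b := by rw [hc]; linarith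
    exact ⟨by linarith [ht.2], by linarith [ht.1]⟩
  have hf'm : MemLp f' (ENNReal.ofReal p) μ := by
    have hp0 : (0:ℝ) ≤ p := by linarith
    have hne : ENNReal.ofReal p ≠ 0 := by
      simp only [ne_eq, ENNReal.ofReal_eq_zero, not_le]; linarith
    have hnt : ENNReal.ofReal p ≠ ⊤ := ENNReal.ofReal_ne_top
    have hm : AEStronglyMeasurable f' μ := hint.1.1
    rw [← memLp_norm_rpow_iff hm hne hnt, ENNReal.toReal_ofReal hp0,
      ENNReal.div_self hne hnt, memLp_one_iff_integrable]
    exact hLp.1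
  have hf'norm : MemLp (fun t => ‖f' t‖) (ENNReal.ofReal p) μ := hf'm.norm
  have hHolder := MeasureTheory.integral_mul_le_Lp_mul_Lq_of_nonneg hpq'
    (Filter.Eventually.of_forall fun t => abs_nonneg (t - c))
    (Filter.Eventually.of_forall fun t => norm_nonneg (f' t)) hkm hf'norm
  -- compute the kernel Lq integral
  have hker_c : Continuous (fun t : ℝ => |t - c| ^ q) := by
    apply Continuous.rpow_const (continuous_abs.comp (continuous_id.sub continuous_const))
    exact fun x => Or.inr hq0.le
  have hval : (∫ t in a..b, |t - c| ^ q) = (b - a) ^ (q + 1) / (2 ^ q * (q + 1)) := by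
    have hi1 : IntervalIntegrable (fun t : ℝ => |t - c| ^ q) volume a c :=
      hker_c.intervalIntegrable a c
    have hi2 : IntervalIntegrable (fun t : ℝ => |t - c| ^ q) volume c b :=
      hker_c.intervalIntegrable c b
    have hac : a ≤ c := by rw [hc]; linarith
    have hcb : c ≤ b := by rw [hc]; linarith
    rw [← intervalIntegral.integral_add_adjacent_intervals hi1 hi2]
    have e1 : (∫ t in a..c, |t - c| ^ q) = ((c - a) ^ (q + 1)) / (q + 1) := by
      rw [intervalIntegral.integral_congr (g := fun t : ℝ => (c - t) ^ q) (by
        intro t ht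
        rw [Set.uIcc_of_le hac] at ht
        show |t - c| ^ q = (c - t) ^ q
        rw [abs_of_nonpos (by linarith [ht.2]), neg_sub])]
      rw [intervalIntegral.integral_comp_sub_left (fun x : ℝ => x ^ q) c, sub_self,
        integral_rpow (Or.inl (by linarith)), Real.zero_rpow (by linarith)]
      ring
    have e2 : (∫ t in c..b, |t - c| ^ q) = ((b - c) ^ (q + 1)) / (q + 1) := by
      rw [intervalIntegral.integral_congr (g := fun t : ℝ => (t - c) ^ q) (by
        intro t ht
        rw [Set.uIcc_of_le hcb] at ht
        show |t - c| ^ q = (t - c) ^ q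
        rw [abs_of_nonneg (by linarith [ht.1])])]
      rw [intervalIntegral.integral_comp_sub_right (fun x : ℝ => x ^ q) c, sub_self,
        integral_rpow (Or.inl (by linarith)), Real.zero_rpow (by linarith)]
      ring
    have hca : c - a = (b - a) / 2 := by rw [hc]; ring
    have hbc2 : b - c = (b - a) / 2 := by rw [hc]; ring
    rw [e1, e2, hca, hbc2, Real.div_rpow hba (by norm_num : (0:ℝ) ≤ 2)]
    have h2 : (2:ℝ) ^ (q + 1) = 2 ^ q * 2 := by
      rw [Real.rpow_add two_pos, Real.rpow_one]
    rw [h2]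
    have h2q : (0:ℝ) < 2 ^ q := Real.rpow_pos_of_pos two_pos q
    field_simp
    ring
  -- the constant
  have hconst : ((b - a) ^ (q + 1) / (2 ^ q * (q + 1))) ^ (1 / q)
      = (b - a) ^ (1 + 1 / q) / (2 * (q + 1) ^ (1 / q)) := by
    have h2q : (0:ℝ) ≤ 2 ^ q := (Real.rpow_pos_of_pos two_pos q).le
    rw [Real.div_rpow (Real.rpow_nonneg hba _) (mul_nonneg h2q hq1.le),
      Real.mul_rpow h2q hq1.le,
      ← Real.rpow_mul hba, ← Real.rpow_mul (by norm_num : (0:ℝ) ≤ 2)]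
    have hA : (q + 1) * (1 / q) = 1 + 1 / q := by field_simp
    have hB : q * (1 / q) = 1 := by field_simp
    rw [hA, hB, Real.rpow_one]
  -- convert interval integrals to μ integrals and assemble
  have conv1 : (∫ t in a..b, |t - c| * ‖f' t‖) = ∫ t, |t - c| * ‖f' t‖ ∂μ := by
    rw [intervalIntegral.integral_of_le hab.le]
  have conv2 : (∫ t in a..b, ‖f' t‖ ^ p) = ∫ t, ‖f' t‖ ^ p ∂μ := by
    rw [intervalIntegral.integral_of_le hab.le]
  have conv3 : (∫ t in a..b, |t - c| ^ q) = ∫ t, |t - c| ^ q ∂μ := by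
    rw [intervalIntegral.integral_of_le hab.le]
  calc ‖∫ t in a..b, (t - c) • f' t‖
      ≤ ∫ t in a..b, |t - c| * ‖f' t‖ := hnorm
    _ = ∫ t, |t - c| * ‖f' t‖ ∂μ := conv1
    _ ≤ (∫ t, |t - c| ^ q ∂μ) ^ (1 / q) * (∫ t, ‖f' t‖ ^ p ∂μ) ^ (1 / p) := by
        exact hHolder
    _ = ((b - a) ^ (1 + 1 / q) / (2 * (q + 1) ^ (1 / q))) *
        (∫ t in a..b, ‖f' t‖ ^ p) ^ (1 / p) := by
        rw [← conv3, ← conv2, hval, hconst]
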